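/- Let t > 0 be real, set s* = 1/2 − it, and let d_m denote the m-th Taylor coefficient at z = 0 of g(z) := e^{s* z³/3} · f_{s*}(z). Then for every real ρ with 0 < ρ < 1 and every nonnegative integer m, |d_m| ≤ ρ^{−m} · exp( ρ/2 + ρ²/4 + |s*| · Σ_{ℓ=4}^∞ ρ^ℓ/ℓ ). -/

import Mathlib

open Real Complex

/-- `f_s(z) = e^{(s−1/2)(z − z²/2)}/(1+z)^s`, holomorphic on the unit disc,
with `(1+z)^s` the principal branch. -/
noncomputable def fRS (s : ℂ) (z : ℂ) : ℂ :=
  Complex.exp ((s - 1/2) * (z - z^2/2)) / (1+z)^s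

/-- `g(z) = e^{s* z³/3} f_{s*}(z)` for `s* = 1/2 − it`. -/
noncomputable def gRS (t : ℝ) (z : ℂ) : ℂ :=
  Complex.exp ((1/2 - t * Complex.I) * z^3/3) * fRS (1/2 - t * Complex.I) z

lemma gRS_diffAt (t : ℝ) {z : ℂ} (hz : ‖z‖ < 1) : DifferentiableAt ℂ (gRS t) z := by
  have hslit := Complex.mem_slitPlane_of_norm_lt_one hz
  have hne : (1 : ℂ) + z ≠ 0 := Complex.slitPlane_ne_zero hslit
  unfold gRS fRS
  apply DifferentiableAt.mul
  · have h1 : DifferentiableAt ℂ (fun z : ℂ => (1/2 - (t : ℂ) * Complex.I) * z^3/3) z := by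
      fun_prop
    exact h1.cexp
  · apply DifferentiableAt.div
    · have h2 : DifferentiableAt ℂ
          (fun z : ℂ => ((1/2 - (t : ℂ) * Complex.I) - 1/2) * (z - z^2/2)) z := by fun_prop
      exact h2.cexp
    · exact ((differentiableAt_const _).add differentiableAt_id).cpow
        (differentiableAt_const _) hslit
    · rw [Ne, Complex.cpow_eq_zero_iff]
      exact fun h => hne h.1

lemma gRS_eq (t : ℝ) {z : ℂ} (hz : ‖z‖ < 1) :
    gRS t z = Complex.exp ((1/2 - t * Complex.I) *
      (z - z^2/2 + z^3/3 - Complex.log (1+z)) - (1/2) * (z - z^2/2)) := by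
  have hslit := Complex.mem_slitPlane_of_norm_lt_one hz
  have hne : (1 : ℂ) + z ≠ 0 := Complex.slitPlane_ne_zero hslit
  rw [gRS, fRS, Complex.cpow_def_of_ne_zero hne, ← Complex.exp_sub, ← Complex.exp_add]
  congr 1
  ring

lemma tail_hasSum {z : ℂ} (hz : ‖z‖ < 1) :
    HasSum (fun n : ℕ => (-1 : ℂ)^(n+4+1) * z^(n+4) / ((n+4 : ℕ) : ℂ))
      (Complex.log (1+z) - (z - z^2/2 + z^3/3)) := by
  have h := Complex.hasSum_taylorSeries_log hz
  have h4 : (∑ j ∈ Finset.range 4, (-1 : ℂ)^(j+1) * z^j / (j : ℂ)) = z - z^2/2 + z^3/3 := by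
    simp [Finset.sum_range_succ]
    ring
  have := (hasSum_nat_add_iff' (f := fun n : ℕ => (-1 : ℂ)^(n+1) * z^n / (n : ℂ)) 4
    (g := Complex.log (1+z))).mpr h
  rw [h4] at this
  exact this

lemma tail_summable {ρ : ℝ} (hρ0 : 0 < ρ) (hρ1 : ρ < 1) :
    Summable (fun n : ℕ => ρ^(n+4)/((n : ℝ)+4)) := by
  apply Summable.of_nonneg_of_le (fun n => by positivity) (fun n => ?_)
    ((summable_geometric_of_lt_one hρ0.le hρ1).mul_left (ρ^4))
  have h1 : ρ^(n+4)/((n : ℝ)+4) ≤ ρ^(n+4) := by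
    apply div_le_self (by positivity)
    have : (0 : ℝ) ≤ (n : ℝ) := n.cast_nonneg
    linarith
  calc ρ^(n+4)/((n : ℝ)+4) ≤ ρ^(n+4) := h1
    _ = ρ^4 * ρ^n := by ring

lemma gRS_sphere_bound (t : ℝ) {ρ : ℝ} (hρ0 : 0 < ρ) (hρ1 : ρ < 1) {z : ℂ} (hz : ‖z‖ = ρ) :
    ‖gRS t z‖ ≤ Real.exp (ρ/2 + ρ^2/4
      + ‖(1/2 - t * Complex.I : ℂ)‖ * ∑' ℓ : ℕ, ρ^(ℓ+4)/((ℓ : ℝ)+4)) := by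
  have hz1 : ‖z‖ < 1 := by rw [hz]; exact hρ1
  rw [gRS_eq t hz1, Complex.norm_exp]
  apply Real.exp_le_exp.mpr
  set s : ℂ := 1/2 - (t : ℂ) * Complex.I with hs
  set u : ℂ := z - z^2/2 + z^3/3 - Complex.log (1+z) with hu
  -- bound ‖u‖ by the tail sum
  have hnorm : ∀ n : ℕ, ‖(-1 : ℂ)^(n+4+1) * z^(n+4) / ((n+4 : ℕ) : ℂ)‖ = ρ^(n+4)/((n : ℝ)+4) := by
    intro n
    rw [norm_div, norm_mul, norm_pow, norm_pow, norm_neg, norm_one, one_pow, one_mul, hz,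
      Complex.norm_natCast]
    push_cast
    ring
  have hsumnorm : Summable (fun n : ℕ =>
      ‖(-1 : ℂ)^(n+4+1) * z^(n+4) / ((n+4 : ℕ) : ℂ)‖) := by
    simpa only [hnorm] using tail_summable hρ0 hρ1
  have hU : ‖u‖ ≤ ∑' ℓ : ℕ, ρ^(ℓ+4)/((ℓ : ℝ)+4) := by
    have h1 : u = -(Complex.log (1+z) - (z - z^2/2 + z^3/3)) := by rw [hu]; ring
    rw [h1, norm_neg, ← (tail_hasSum hz1).tsum_eq]
    calc ‖∑' n : ℕ, (-1 : ℂ)^(n+4+1) * z^(n+4) / ((n+4 : ℕ) : ℂ)‖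
        ≤ ∑' n : ℕ, ‖(-1 : ℂ)^(n+4+1) * z^(n+4) / ((n+4 : ℕ) : ℂ)‖ :=
          norm_tsum_le_tsum_norm hsumnorm
      _ = ∑' ℓ : ℕ, ρ^(ℓ+4)/((ℓ : ℝ)+4) := tsum_congr hnorm
  have hre : (s * u - (1/2 : ℂ) * (z - z^2/2)).re
      ≤ ‖s‖ * ‖u‖ + (1/2) * (ρ + ρ^2/2) := by
    calc (s * u - (1/2 : ℂ) * (z - z^2/2)).re
        ≤ ‖s * u - (1/2 : ℂ) * (z - z^2/2)‖ := Complex.re_le_norm _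
      _ ≤ ‖s * u‖ + ‖(1/2 : ℂ) * (z - z^2/2)‖ := norm_sub_le _ _
      _ ≤ ‖s‖ * ‖u‖ + (1/2) * (ρ + ρ^2/2) := by
          rw [norm_mul, norm_mul]
          gcongr
          · norm_num
          · calc ‖z - z^2/2‖ ≤ ‖z‖ + ‖z^2/2‖ := norm_sub_le _ _
              _ = ρ + ρ^2/2 := by rw [norm_div, norm_pow, hz]; norm_num
  have habs : ‖s‖ = ‖s‖ := rfl
  calc (s * u - (1/2 : ℂ) * (z - z^2/2)).re
      ≤ ‖s‖ * ‖u‖ + (1/2) * (ρ + ρ^2/2) := hre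
    _ ≤ ‖s‖ * (∑' ℓ : ℕ, ρ^(ℓ+4)/((ℓ : ℝ)+4)) + (1/2) * (ρ + ρ^2/2) := by
        gcongr
    _ = ρ/2 + ρ^2/4 + ‖s‖ * ∑' ℓ : ℕ, ρ^(ℓ+4)/((ℓ : ℝ)+4) := by
        rw [habs]; ring

lemma cauchy_coeff_bound {f : ℂ → ℂ} {ρ M : ℝ} (hρ : 0 < ρ)
    (hd : DifferentiableOn ℂ f (Metric.closedBall 0 ρ))
    (hM : ∀ z : ℂ, ‖z‖ = ρ → ‖f z‖ ≤ M) (m : ℕ) :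
    ‖iteratedDeriv m f 0‖ ≤ (m.factorial : ℝ) * M / ρ^m := by
  have hM0 : 0 ≤ M := by
    have := hM (ρ : ℂ) (by rw [Complex.norm_real, Real.norm_eq_abs, abs_of_pos hρ])
    exact (norm_nonneg _).trans this
  set R : NNReal := ⟨ρ, hρ.le⟩ with hR
  have hR0 : 0 < R := by exact_mod_cast hρ
  have hp : HasFPowerSeriesOnBall f (cauchyPowerSeries f 0 R) 0 R :=
    hd.hasFPowerSeriesOnBall hR0
  have key := hp.factorial_smul (y := (1 : ℂ)) m
  have hid : iteratedDeriv m f 0 = iteratedFDeriv ℂ m f 0 (fun _ => (1 : ℂ)) :=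
    iteratedDeriv_eq_iteratedFDeriv
  -- integral bound
  have hcont : Continuous fun θ : ℝ => ‖f (circleMap 0 ρ θ)‖ := by
    apply Continuous.norm
    apply hd.continuousOn.comp_continuous (continuous_circleMap 0 ρ)
    intro θ
    simp [Metric.mem_closedBall, Complex.dist_eq, abs_of_pos hρ]
  have hint : (∫ θ : ℝ in (0)..2 * π, ‖f (circleMap 0 ρ θ)‖) ≤ 2 * π * M := by
    have := intervalIntegral.integral_mono_on (μ := MeasureTheory.volume) (a := 0) (b := 2 * π)
      (f := fun θ : ℝ => ‖f (circleMap 0 ρ θ)‖) (g := fun _ : ℝ => M)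
      (by positivity) (hcont.intervalIntegrable 0 (2 * π)) intervalIntegrable_const
      (fun θ _ => by
        apply hM
        rw [norm_circleMap_zero, abs_of_pos hρ])
    simpa using this
  have hcoeff : ‖cauchyPowerSeries f 0 R m‖ ≤ M * (ρ⁻¹)^m := by
    have h1 := norm_cauchyPowerSeries_le f 0 R m
    have h2 : ((R : ℝ)) = ρ := rfl
    rw [h2, abs_of_pos hρ] at h1
    have hρinv : (0:ℝ) ≤ (ρ⁻¹)^m := by positivity
    refine h1.trans (mul_le_mul_of_nonneg_right ?_ hρinv)
    rw [inv_mul_le_iff₀ Real.two_pi_pos]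
    exact hint
  have happ : ‖(cauchyPowerSeries f 0 R m) (fun _ => (1 : ℂ))‖
      ≤ ‖cauchyPowerSeries f 0 R m‖ := by
    have := (cauchyPowerSeries f 0 R m).le_opNorm (fun _ => (1 : ℂ))
    simpa using this
  calc ‖iteratedDeriv m f 0‖
      = ‖(m.factorial : ℕ) • (cauchyPowerSeries f 0 R m) (fun _ => (1 : ℂ))‖ := by
        rw [hid, ← key]
    _ = (m.factorial : ℝ) * ‖(cauchyPowerSeries f 0 R m) (fun _ => (1 : ℂ))‖ := by
        rw [nsmul_eq_mul, norm_mul, Complex.norm_natCast]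
    _ ≤ (m.factorial : ℝ) * (M * (ρ⁻¹)^m) := by
        gcongr
        exact happ.trans hcoeff
    _ = (m.factorial : ℝ) * M / ρ^m := by
        rw [inv_pow]
        ring

/-- Let `t > 0`, `s* = 1/2 − it`, and let `d_m = g^{(m)}(0)/m!` be the Taylor
coefficients of `g(z) = e^{s* z³/3} f_{s*}(z)` at `0`. Then for every `0 < ρ < 1`
and every `m ≥ 0`, `|d_m| ≤ ρ^{−m} exp(ρ/2 + ρ²/4 + |s*| Σ_{ℓ=4}^∞ ρ^ℓ/ℓ)`. -/
theorem stmt_11 (t : ℝ) (ht : 0 < t) (ρ : ℝ) (hρ0 : 0 < ρ) (hρ1 : ρ < 1) (m : ℕ) :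
    ‖iteratedDeriv m (gRS t) 0 / (Nat.factorial m : ℂ)‖
      ≤ ρ^(-(m:ℤ)) * Real.exp (ρ/2 + ρ^2/4
          + ‖(1/2 - t * Complex.I : ℂ)‖ * ∑' ℓ : ℕ, ρ^(ℓ+4)/((ℓ:ℝ)+4)) := by
  set M : ℝ := Real.exp (ρ/2 + ρ^2/4
    + ‖(1/2 - t * Complex.I : ℂ)‖ * ∑' ℓ : ℕ, ρ^(ℓ+4)/((ℓ:ℝ)+4)) with hMdef
  have hd : DifferentiableOn ℂ (gRS t) (Metric.closedBall 0 ρ) := by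
    intro z hz
    apply (gRS_diffAt t ?_).differentiableWithinAt
    rw [Metric.mem_closedBall, Complex.dist_eq, sub_zero] at hz
    exact lt_of_le_of_lt hz hρ1
  have hM : ∀ z : ℂ, ‖z‖ = ρ → ‖gRS t z‖ ≤ M := fun z hz => gRS_sphere_bound t hρ0 hρ1 hz
  have hkey := cauchy_coeff_bound hρ0 hd hM m
  have hfact : (0 : ℝ) < (m.factorial : ℝ) := by exact_mod_cast m.factorial_pos
  rw [norm_div, Complex.norm_natCast]
  rw [div_le_iff₀ hfact]
  calc ‖iteratedDeriv m (gRS t) 0‖ ≤ (m.factorial : ℝ) * M / ρ^m := hkey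
    _ = ρ^(-(m:ℤ)) * M * (m.factorial : ℝ) := by
        rw [zpow_neg, zpow_natCast]
        field_simp
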